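/- arXiv:2501.06673 — 3 statements merged into one kernel-verified Lean document; each statement's English description precedes it below -/
import Mathlib

section
/- Let H be a Hopf algebra, A an H-module algebra with adjoint action given by an algebra homomorphism u : H → A, and F ∈ H⊗H a counital 2-cocycle with F⁻¹ = f'⊗f''. Then the map η : A_F → A sending a to (f' ▷ a)·u(f'') is an isomorphism of algebras. -/
open TensorProduct LinearMap

noncomputable section

variable (k : Type) [Field k]
variable (H : Type) [Ring H] [HopfAlgebra k H]

/-- `F`, with inverse `Finv`, is a counital 2-cocycle on the Hopf algebra `H`:
`(F⊗1)·(Δ⊗id)(F) = (1⊗F)·(id⊗Δ)(F)` and `(ε⊗id)(F) = 1 = (id⊗ε)(F)`. -/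
def IsCocycle (F Finv : H ⊗[k] H) : Prop :=
  F * Finv = 1 ∧ Finv * F = 1 ∧
  (F ⊗ₜ[k] (1 : H)) * (TensorProduct.map Coalgebra.comul LinearMap.id F) =
    (TensorProduct.assoc k H H H).symm
      (((1 : H) ⊗ₜ[k] F) * (TensorProduct.map LinearMap.id Coalgebra.comul F)) ∧
  TensorProduct.map Coalgebra.counit LinearMap.id F = 1 ∧
  TensorProduct.map LinearMap.id Coalgebra.counit F = 1

/-- A (left) module-algebra structure of a Hopf algebra `H` on an algebra `A`:
`A` is an algebra object in the category of `H`-modules. -/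
structure ModuleAlgebra (A : Type) [Ring A] [Algebra k A] where
  act : H →ₗ[k] Module.End k A
  act_one : act 1 = 1
  act_mul : ∀ g h : H, act (g * h) = act g * act h
  act_algebra_unit : ∀ h : H, act h (1 : A) = (Coalgebra.counit h : k) • (1 : A)
  act_algebra_mul : ∀ (h : H) (a b : A),
    act h (a * b) = LinearMap.mul' k A
      ((TensorProduct.homTensorHomMap (RingHom.id k) A A A A
        (TensorProduct.map act act (Coalgebra.comul h))) (a ⊗ₜ[k] b))

variable {k H}

/-- The operator on `A ⊗ B` obtained by letting an element `x ∈ H ⊗ H` act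
legwise through the actions `actA`, `actB`. -/
def legAct {A B : Type} [AddCommGroup A] [Module k A] [AddCommGroup B] [Module k B]
    (actA : H →ₗ[k] Module.End k A) (actB : H →ₗ[k] Module.End k B) (x : H ⊗[k] H) :
    A ⊗[k] B →ₗ[k] A ⊗[k] B :=
  TensorProduct.homTensorHomMap (RingHom.id k) A B A B (TensorProduct.map actA actB x)

/-- The twisted product `m_F = m ∘ (F⁻¹ ▷ −)` on `A`. -/
def twistedMul {A : Type} [Ring A] [Algebra k A] (ma : ModuleAlgebra k H A)
    (Finv : H ⊗[k] H) : A ⊗[k] A →ₗ[k] A :=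
  LinearMap.mul' k A ∘ₗ legAct ma.act ma.act Finv

/-- The twisted coproduct `Δ_F(h) = F·Δ(h)·F⁻¹`. -/
def twistedComul (F Finv : H ⊗[k] H) : H →ₗ[k] H ⊗[k] H :=
  LinearMap.mulLeft k F ∘ₗ LinearMap.mulRight k Finv ∘ₗ Coalgebra.comul


/-- A representation of a `k`-algebra `A` on a `k`-vector space `V`. -/
structure AlgRep (A : Type) [Ring A] [Algebra k A] (V : Type) [AddCommGroup V] [Module k V] where
  ρ : A →ₗ[k] Module.End k V
  ρ_one : ρ 1 = 1
  ρ_mul : ∀ a b : A, ρ (a * b) = ρ a * ρ b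

/-- `V` is an `(H,A)`-module: the `A`-action is a morphism of `H`-modules, i.e.
`h ▷ (a ▷_A v) = (h₍₁₎ ▷ a) ▷_A (h₍₂₎ ▷ v)`. -/
def IsHAModule {A V : Type} [Ring A] [Algebra k A] [AddCommGroup V] [Module k V]
    (ma : ModuleAlgebra k H A) (ρA : AlgRep (k := k) A V) (ρH : AlgRep (k := k) H V) : Prop :=
  ∀ (h : H) (a : A) (v : V),
    ρH.ρ h (ρA.ρ a v) =
      TensorProduct.lift ρA.ρ (legAct ma.act ρH.ρ (Coalgebra.comul h) (a ⊗ₜ[k] v))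

/-- The Giaquinto–Zhang twisted action `▷_F = ▷_A ∘ (F⁻¹ ▷ −)` of `A_F` on `V`. -/
def twistedAct {A V : Type} [Ring A] [Algebra k A] [AddCommGroup V] [Module k V]
    (ma : ModuleAlgebra k H A) (ρA : AlgRep (k := k) A V) (ρH : AlgRep (k := k) H V)
    (Finv : H ⊗[k] H) : A →ₗ[k] Module.End k V :=
  TensorProduct.curry (TensorProduct.lift ρA.ρ ∘ₗ legAct ma.act ρH.ρ Finv)

/-- Generic smash-product multiplication on `A ⊗ H`, for a multiplication `μA` on `A`,
comultiplication `δ` and multiplication `μH` on `H`, and action `actUn : H ⊗ A → A`: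
`(a # h)(b # g) = a·(h₍₁₎ ▷ b) # h₍₂₎·g`. -/
def smashMulMap {A : Type} [AddCommGroup A] [Module k A]
    (μA : A ⊗[k] A →ₗ[k] A) (δ : H →ₗ[k] H ⊗[k] H) (μH : H ⊗[k] H →ₗ[k] H)
    (actUn : H ⊗[k] A →ₗ[k] A) :
    (A ⊗[k] H) ⊗[k] (A ⊗[k] H) →ₗ[k] A ⊗[k] H :=
  TensorProduct.map μA LinearMap.id
    ∘ₗ (TensorProduct.assoc k A A H).symm.toLinearMap
    ∘ₗ (TensorProduct.map LinearMap.id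
          ((TensorProduct.map actUn μH)
            ∘ₗ (TensorProduct.tensorTensorTensorComm k H H A H).toLinearMap))
    ∘ₗ (TensorProduct.assoc k A (H ⊗[k] H) (A ⊗[k] H)).toLinearMap
    ∘ₗ TensorProduct.map (TensorProduct.map LinearMap.id δ) LinearMap.id

/-- The adjoint (strongly inner) action `h ▷ a = u(h₍₁₎)·a·u(S(h₍₂₎))` of `H` on `A`,
along an algebra homomorphism `u : H → A`. -/
def adjointAction {A : Type} [Ring A] [Algebra k A] (u : H →ₐ[k] A) :
    H →ₗ[k] Module.End k A :=
  LinearMap.mul' k (Module.End k A)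
    ∘ₗ TensorProduct.map (LinearMap.mul k A ∘ₗ u.toLinearMap)
        ((LinearMap.mul k A).flip ∘ₗ u.toLinearMap ∘ₗ HopfAlgebra.antipode (R := k))
    ∘ₗ Coalgebra.comul

/-- The Kulish–Mudrov map `η : A_F → A`, `a ↦ (f' ▷ a)·u(f'')` with `F⁻¹ = f' ⊗ f''`. -/
def kulishMudrovEta {A : Type} [Ring A] [Algebra k A] (ma : ModuleAlgebra k H A)
    (u : H →ₐ[k] A) (Finv : H ⊗[k] H) : A →ₗ[k] A :=
  LinearMap.mul' k A
    ∘ₗ TensorProduct.map (TensorProduct.lift ma.act) u.toLinearMap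
    ∘ₗ (TensorProduct.assoc k H A H).symm.toLinearMap
    ∘ₗ TensorProduct.map LinearMap.id (TensorProduct.comm k H A).toLinearMap
    ∘ₗ (TensorProduct.assoc k H H A).toLinearMap
    ∘ₗ TensorProduct.mk k (H ⊗[k] H) A Finv

section KMAux
set_option synthInstance.maxHeartbeats 800000
set_option maxHeartbeats 1600000
open Coalgebra HopfAlgebra

theorem antipode_one' : (antipode (R:=k) (A:=H)) 1 = 1 := by
  have h := HopfAlgebra.mul_antipode_rTensor_comul_apply (R:=k) (a := (1:H))
  simpa [Algebra.TensorProduct.one_def] using h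

section Conv
variable {C : Type} [AddCommGroup C] [Module k C] [Coalgebra k C]
variable {B : Type} [Ring B] [Algebra k B]

/-- convolution -/
def conv (f g : C →ₗ[k] B) : C →ₗ[k] B :=
  mul' k B ∘ₗ TensorProduct.map f g ∘ₗ Coalgebra.comul

/-- convolution unit -/
def convOne : C →ₗ[k] B := Algebra.linearMap k B ∘ₗ Coalgebra.counit

lemma conv_apply (f g : C →ₗ[k] B) (c : C) :
    conv f g c = mul' k B (TensorProduct.map f g (Coalgebra.comul c)) := rfl

lemma mul_assoc_map :
    (mul' k B) ∘ₗ (mul' k B).rTensor B =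
    ((mul' k B) ∘ₗ (mul' k B).lTensor B) ∘ₗ (TensorProduct.assoc k B B B).toLinearMap := by
  apply TensorProduct.ext_threefold
  intro a b c
  simp [mul_assoc]

lemma conv_assoc (f g h : C →ₗ[k] B) : conv (conv f g) h = conv f (conv g h) := by
  have h1 : TensorProduct.map (conv f g) h
      = (mul' k B).rTensor B ∘ₗ TensorProduct.map (TensorProduct.map f g) h
        ∘ₗ (Coalgebra.comul (R:=k)).rTensor C := by
    rw [LinearMap.rTensor, LinearMap.rTensor, ← TensorProduct.map_comp, ← TensorProduct.map_comp]
    rfl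
  have h2 : TensorProduct.map f (conv g h)
      = (mul' k B).lTensor B ∘ₗ TensorProduct.map f (TensorProduct.map g h)
        ∘ₗ (Coalgebra.comul (R:=k)).lTensor C := by
    rw [LinearMap.lTensor, LinearMap.lTensor, ← TensorProduct.map_comp, ← TensorProduct.map_comp]
    rfl
  ext c
  rw [conv_apply, conv_apply, h1, h2]
  simp only [LinearMap.comp_apply]
  rw [← Coalgebra.coassoc_symm_apply (R:=k), TensorProduct.map_map_assoc_symm,
    ← LinearMap.comp_apply (mul' k B) ((mul' k B).rTensor B), mul_assoc_map]
  simp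

lemma conv_one_right (f : C →ₗ[k] B) : conv f convOne = f := by
  have h1 : (mul' k B) ∘ₗ TensorProduct.map f (Algebra.linearMap k B ∘ₗ Coalgebra.counit)
      = f ∘ₗ (TensorProduct.rid k C).toLinearMap ∘ₗ (Coalgebra.counit (R:=k) (A:=C)).lTensor C := by
    apply TensorProduct.ext'
    intro x y
    simp [Algebra.smul_def, Algebra.commutes]
  ext c
  rw [conv_apply, _root_.convOne, ← LinearMap.comp_apply (mul' k B), h1]
  have h2 := LinearMap.congr_fun (Coalgebra.lTensor_counit_comp_comul (R:=k) (A:=C)) c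
  simp only [LinearMap.comp_apply] at h2
  simp [h2]

lemma conv_one_left (f : C →ₗ[k] B) : conv convOne f = f := by
  have h1 : (mul' k B) ∘ₗ TensorProduct.map (Algebra.linearMap k B ∘ₗ Coalgebra.counit) f
      = f ∘ₗ (TensorProduct.lid k C).toLinearMap ∘ₗ (Coalgebra.counit (R:=k) (A:=C)).rTensor C := by
    apply TensorProduct.ext'
    intro x y
    simp [Algebra.smul_def, Algebra.commutes]
  ext c
  rw [conv_apply, _root_.convOne, ← LinearMap.comp_apply (mul' k B), h1]
  have h2 := LinearMap.congr_fun (Coalgebra.rTensor_counit_comp_comul (R:=k) (A:=C)) c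
  simp only [LinearMap.comp_apply] at h2
  simp [h2]

end Conv

section AntipodeMul

lemma tA (W₁ W₂ : H ⊗[k] H) :
    mul' k H (TensorProduct.map (mul' k H) ((antipode (R:=k)) ∘ₗ mul' k H)
      (TensorProduct.tensorTensorTensorComm k H H H H (W₁ ⊗ₜ[k] W₂))) =
    mul' k H (LinearMap.lTensor H (antipode (R:=k)) (W₁ * W₂)) := by
  induction W₁ using TensorProduct.induction_on with
  | zero => simp
  | tmul a b =>
    induction W₂ using TensorProduct.induction_on with
    | zero => simp
    | tmul c d => simp [Algebra.TensorProduct.tmul_mul_tmul]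
    | add X Y hX hY => simp only [TensorProduct.tmul_add, map_add, mul_add, hX, hY]
  | add X Y hX hY => simp only [TensorProduct.add_tmul, map_add, add_mul, hX, hY]

lemma dg : conv (mul' k H) ((antipode (R:=k)) ∘ₗ mul' k H) = (convOne : H ⊗[k] H →ₗ[k] H) := by
  apply TensorProduct.ext'
  intro x y
  rw [conv_apply]
  rw [show (Coalgebra.comul (R:=k) (x ⊗ₜ[k] y)) =
      TensorProduct.tensorTensorTensorComm k H H H H
        ((Coalgebra.comul (R:=k) x) ⊗ₜ[k] (Coalgebra.comul (R:=k) y)) by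
    simp [TensorProduct.comul_tmul, AlgebraTensorModule.tensorTensorTensorComm_eq]]
  rw [tA, ← Bialgebra.comul_mul, HopfAlgebra.mul_antipode_lTensor_comul_apply]
  simp [_root_.convOne, TensorProduct.counit_tmul]
  exact Algebra.commutes _ _

lemma tB1 (c d : H) (W₁ : H ⊗[k] H) :
    mul' k H (TensorProduct.map
        (mul' k H ∘ₗ TensorProduct.map (antipode (R:=k)) (antipode (R:=k))
          ∘ₗ (TensorProduct.comm k H H).toLinearMap) (mul' k H)
      (TensorProduct.tensorTensorTensorComm k H H H H (W₁ ⊗ₜ[k] (c ⊗ₜ[k] d)))) =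
    antipode (R:=k) c * mul' k H (LinearMap.rTensor H (antipode (R:=k)) W₁) * d := by
  induction W₁ using TensorProduct.induction_on with
  | zero => simp
  | tmul a b => simp [mul_assoc]
  | add X Y hX hY =>
    simp only [TensorProduct.add_tmul, map_add, mul_add, add_mul, hX, hY]

lemma tB2 (x : H) (W₂ : H ⊗[k] H) :
    mul' k H (TensorProduct.map
        (mul' k H ∘ₗ TensorProduct.map (antipode (R:=k)) (antipode (R:=k))
          ∘ₗ (TensorProduct.comm k H H).toLinearMap) (mul' k H)
      (TensorProduct.tensorTensorTensorComm k H H H H ((Coalgebra.comul (R:=k) x) ⊗ₜ[k] W₂))) =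
    Coalgebra.counit (R:=k) x • mul' k H (LinearMap.rTensor H (antipode (R:=k)) W₂) := by
  induction W₂ using TensorProduct.induction_on with
  | zero => simp
  | tmul c d =>
    rw [tB1, HopfAlgebra.mul_antipode_rTensor_comul_apply]
    simp [Algebra.smul_def, Algebra.commutes, mul_assoc]
  | add X Y hX hY =>
    simp only [TensorProduct.tmul_add, map_add, smul_add, hX, hY]

lemma df : conv (mul' k H ∘ₗ TensorProduct.map (antipode (R:=k)) (antipode (R:=k))
      ∘ₗ (TensorProduct.comm k H H).toLinearMap) (mul' k H)
    = (convOne : H ⊗[k] H →ₗ[k] H) := by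
  apply TensorProduct.ext'
  intro x y
  rw [conv_apply]
  rw [show (Coalgebra.comul (R:=k) (x ⊗ₜ[k] y)) =
      TensorProduct.tensorTensorTensorComm k H H H H
        ((Coalgebra.comul (R:=k) x) ⊗ₜ[k] (Coalgebra.comul (R:=k) y)) by
    simp [TensorProduct.comul_tmul, AlgebraTensorModule.tensorTensorTensorComm_eq]]
  rw [tB2, HopfAlgebra.mul_antipode_rTensor_comul_apply]
  simp [_root_.convOne, TensorProduct.counit_tmul, Algebra.smul_def, map_mul]
  exact Algebra.commutes _ _

theorem antipode_mul' (x y : H) :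
    antipode (R:=k) (x * y) = antipode (R:=k) y * antipode (R:=k) x := by
  have h : (mul' k H ∘ₗ TensorProduct.map (antipode (R:=k)) (antipode (R:=k))
        ∘ₗ (TensorProduct.comm k H H).toLinearMap)
      = ((antipode (R:=k)) ∘ₗ mul' k H : H ⊗[k] H →ₗ[k] H) := by
    calc (mul' k H ∘ₗ TensorProduct.map (antipode (R:=k)) (antipode (R:=k))
        ∘ₗ (TensorProduct.comm k H H).toLinearMap)
        = conv (mul' k H ∘ₗ TensorProduct.map (antipode (R:=k)) (antipode (R:=k))
            ∘ₗ (TensorProduct.comm k H H).toLinearMap)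
            (conv (mul' k H) ((antipode (R:=k)) ∘ₗ mul' k H)) := by rw [dg, conv_one_right]
      _ = conv (conv (mul' k H ∘ₗ TensorProduct.map (antipode (R:=k)) (antipode (R:=k))
            ∘ₗ (TensorProduct.comm k H H).toLinearMap) (mul' k H))
            ((antipode (R:=k)) ∘ₗ mul' k H) := by rw [conv_assoc]
      _ = ((antipode (R:=k)) ∘ₗ mul' k H : H ⊗[k] H →ₗ[k] H) := by rw [df, conv_one_left]
  have := LinearMap.congr_fun h (x ⊗ₜ[k] y)
  simpa using this.symm

end AntipodeMul

section Cocycle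

open Coalgebra Bialgebra

/-- `ε⊗id` contraction `H⊗H → H`. -/
def eL : H ⊗[k] H →ₗ[k] H :=
  (TensorProduct.lid k H).toLinearMap ∘ₗ LinearMap.rTensor H (Coalgebra.counit (R:=k))

/-- `id⊗ε` contraction `H⊗H → H`. -/
def eR : H ⊗[k] H →ₗ[k] H :=
  (TensorProduct.rid k H).toLinearMap ∘ₗ LinearMap.lTensor H (Coalgebra.counit (R:=k))

/-- `m∘(S⊗id)` contraction. -/
def cL : H ⊗[k] H →ₗ[k] H := mul' k H ∘ₗ LinearMap.rTensor H (antipode (R:=k))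

/-- `m∘(id⊗S)` contraction. -/
def cR : H ⊗[k] H →ₗ[k] H := mul' k H ∘ₗ LinearMap.lTensor H (antipode (R:=k))

@[simp] lemma eL_tmul (x y : H) : eL (x ⊗ₜ[k] y) = Coalgebra.counit (R:=k) x • y := by
  simp [eL]
@[simp] lemma eR_tmul (x y : H) : eR (x ⊗ₜ[k] y) = Coalgebra.counit (R:=k) y • x := by
  simp [eR]
@[simp] lemma cL_tmul (x y : H) : cL (x ⊗ₜ[k] y) = antipode (R:=k) x * y := by
  simp [cL]
@[simp] lemma cR_tmul (x y : H) : cR (x ⊗ₜ[k] y) = x * antipode (R:=k) y := by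
  simp [cR]

lemma cL_comul (x : H) : cL (Coalgebra.comul (R:=k) x) = algebraMap k H (Coalgebra.counit x) :=
  HopfAlgebra.mul_antipode_rTensor_comul_apply x

lemma cR_comul (x : H) : cR (Coalgebra.comul (R:=k) x) = algebraMap k H (Coalgebra.counit x) :=
  HopfAlgebra.mul_antipode_lTensor_comul_apply x

variable (F Finv : H ⊗[k] H)

lemma mapCounitL_eq (X : H ⊗[k] H) :
    (Algebra.TensorProduct.map (Bialgebra.counitAlgHom k H) (AlgHom.id k H)) X
      = TensorProduct.map (Coalgebra.counit) LinearMap.id X := by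
  have hmap : (Algebra.TensorProduct.map (Bialgebra.counitAlgHom k H) (AlgHom.id k H)).toLinearMap
      = TensorProduct.map (Coalgebra.counit (R:=k) (A:=H)) LinearMap.id :=
    TensorProduct.ext' fun x y => by simp
  exact LinearMap.congr_fun hmap X

lemma mapCounitR_eq (X : H ⊗[k] H) :
    (Algebra.TensorProduct.map (AlgHom.id k H) (Bialgebra.counitAlgHom k H)) X
      = TensorProduct.map LinearMap.id (Coalgebra.counit) X := by
  have hmap : (Algebra.TensorProduct.map (AlgHom.id k H) (Bialgebra.counitAlgHom k H)).toLinearMap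
      = TensorProduct.map LinearMap.id (Coalgebra.counit (R:=k) (A:=H)) :=
    TensorProduct.ext' fun x y => by simp
  exact LinearMap.congr_fun hmap X

lemma mapComulL_eq (X : H ⊗[k] H) :
    (Algebra.TensorProduct.map (Bialgebra.comulAlgHom k H) (AlgHom.id k H)) X
      = TensorProduct.map (Coalgebra.comul) LinearMap.id X := by
  have hmap : (Algebra.TensorProduct.map (Bialgebra.comulAlgHom k H) (AlgHom.id k H)).toLinearMap
      = TensorProduct.map (Coalgebra.comul (R:=k) (A:=H)) LinearMap.id :=
    TensorProduct.ext' fun x y => by simp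
  exact LinearMap.congr_fun hmap X

lemma mapComulR_eq (X : H ⊗[k] H) :
    (Algebra.TensorProduct.map (AlgHom.id k H) (Bialgebra.comulAlgHom k H)) X
      = TensorProduct.map LinearMap.id (Coalgebra.comul) X := by
  have hmap : (Algebra.TensorProduct.map (AlgHom.id k H) (Bialgebra.comulAlgHom k H)).toLinearMap
      = TensorProduct.map LinearMap.id (Coalgebra.comul (R:=k) (A:=H)) :=
    TensorProduct.ext' fun x y => by simp
  exact LinearMap.congr_fun hmap X

lemma assocAlg_eq (X : (H ⊗[k] H) ⊗[k] H) :
    (Algebra.TensorProduct.assoc k k k H H H) X = TensorProduct.assoc k H H H X := by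
  have hmap : (Algebra.TensorProduct.assoc k k k H H H).toLinearMap
      = (TensorProduct.assoc k H H H).toLinearMap :=
    TensorProduct.ext_threefold fun x y z => by simp
  simpa using LinearMap.congr_fun hmap X
lemma assocAlg_symm_eq (X : H ⊗[k] (H ⊗[k] H)) :
    (Algebra.TensorProduct.assoc k k k H H H).symm X = (TensorProduct.assoc k H H H).symm X := by
  apply (Algebra.TensorProduct.assoc k k k H H H).injective
  rw [AlgEquiv.apply_symm_apply, assocAlg_eq, LinearEquiv.apply_symm_apply]

set_option linter.unusedSectionVars false
variable {F Finv}
variable (h1 : F * Finv = 1) (h2 : Finv * F = 1)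
    (h4 : TensorProduct.map (Coalgebra.counit) LinearMap.id F = 1)
    (h5 : TensorProduct.map LinearMap.id (Coalgebra.counit) F = 1)

include h1 h2 h4 in
lemma counitL_Finv : TensorProduct.map (Coalgebra.counit) LinearMap.id Finv = 1 := by
  have hFv : (Algebra.TensorProduct.map (Bialgebra.counitAlgHom k H) (AlgHom.id k H)) F = 1 := by
    rw [mapCounitL_eq, h4]
  calc TensorProduct.map (Coalgebra.counit) LinearMap.id Finv
      = (Algebra.TensorProduct.map (Bialgebra.counitAlgHom k H) (AlgHom.id k H)) Finv * 1 := by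
        rw [mapCounitL_eq, mul_one]
    _ = (Algebra.TensorProduct.map (Bialgebra.counitAlgHom k H) (AlgHom.id k H)) (Finv * F) := by
        rw [map_mul, hFv]
    _ = 1 := by rw [h2, map_one]

include h1 h2 h5 in
lemma counitR_Finv : TensorProduct.map LinearMap.id (Coalgebra.counit) Finv = 1 := by
  have hFv : (Algebra.TensorProduct.map (AlgHom.id k H) (Bialgebra.counitAlgHom k H)) F = 1 := by
    rw [mapCounitR_eq, h5]
  calc TensorProduct.map LinearMap.id (Coalgebra.counit) Finv
      = (Algebra.TensorProduct.map (AlgHom.id k H) (Bialgebra.counitAlgHom k H)) Finv * 1 := by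
        rw [mapCounitR_eq, mul_one]
    _ = (Algebra.TensorProduct.map (AlgHom.id k H) (Bialgebra.counitAlgHom k H)) (Finv * F) := by
        rw [map_mul, hFv]
    _ = 1 := by rw [h2, map_one]

lemma eL_of_counitL {X : H ⊗[k] H} (hX : TensorProduct.map (Coalgebra.counit) LinearMap.id X = 1) :
    eL X = 1 := by
  have : eL X = (TensorProduct.lid k H) (TensorProduct.map (Coalgebra.counit) LinearMap.id X) := by
    have hmap : (eL : H ⊗[k] H →ₗ[k] H) = (TensorProduct.lid k H).toLinearMap
        ∘ₗ TensorProduct.map (Coalgebra.counit) LinearMap.id :=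
      TensorProduct.ext' fun x y => by simp
    simpa using LinearMap.congr_fun hmap X
  rw [this, hX, Algebra.TensorProduct.one_def]
  simp

lemma eR_of_counitR {X : H ⊗[k] H} (hX : TensorProduct.map LinearMap.id (Coalgebra.counit) X = 1) :
    eR X = 1 := by
  have : eR X = (TensorProduct.rid k H) (TensorProduct.map LinearMap.id (Coalgebra.counit) X) := by
    have hmap : (eR : H ⊗[k] H →ₗ[k] H) = (TensorProduct.rid k H).toLinearMap
        ∘ₗ TensorProduct.map LinearMap.id (Coalgebra.counit) :=
      TensorProduct.ext' fun x y => by simp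
    simpa using LinearMap.congr_fun hmap X
  rw [this, hX, Algebra.TensorProduct.one_def]
  simp

end Cocycle

section Twist
set_option linter.unusedSectionVars false
open Coalgebra Bialgebra

lemma central_mul (c : k) (z w : H) : z * algebraMap k H c * w = c • (z * w) := by
  rw [← Algebra.commutes, mul_assoc, ← Algebra.smul_def]

/-- `x ⊗ y ↦ Δ(x)·(1 ⊗ S y)`. -/
def dd : H ⊗[k] H →ₗ[k] H ⊗[k] H :=
  mul' k (H ⊗[k] H) ∘ₗ TensorProduct.map (Coalgebra.comul)
    (TensorProduct.mk k H H 1 ∘ₗ antipode (R:=k))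

@[simp] lemma dd_tmul (x y : H) :
    dd (x ⊗ₜ[k] y) = Coalgebra.comul (R:=k) x * ((1:H) ⊗ₜ[k] antipode (R:=k) y) := by
  simp [dd]

/-- `(x ⊗ y) ⊗ z ↦ x ⊗ (y · S z)`. -/
def phi2 : (H ⊗[k] H) ⊗[k] H →ₗ[k] H ⊗[k] H :=
  LinearMap.lTensor H cR ∘ₗ (TensorProduct.assoc k H H H).toLinearMap

/-- `(x ⊗ y) ⊗ z ↦ x · S(y) · z`?? no: `x · S y` then times z: `(x S y) z`. -/
def psi : (H ⊗[k] H) ⊗[k] H →ₗ[k] H :=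
  mul' k H ∘ₗ LinearMap.rTensor H cR

lemma cL_mul_tmul (p q : H) (W : H ⊗[k] H) :
    cL (W * (p ⊗ₜ[k] q)) = antipode (R:=k) p * cL W * q := by
  induction W using TensorProduct.induction_on with
  | zero => simp
  | tmul r s =>
    simp [Algebra.TensorProduct.tmul_mul_tmul, antipode_mul', mul_assoc]
  | add X Y hX hY => simp only [add_mul, map_add, hX, hY, mul_add]

lemma cR_tmul_mul (p q : H) (W : H ⊗[k] H) :
    cR ((p ⊗ₜ[k] q) * W) = p * cR W * antipode (R:=k) q := by
  induction W using TensorProduct.induction_on with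
  | zero => simp
  | tmul r s =>
    simp [Algebra.TensorProduct.tmul_mul_tmul, antipode_mul', mul_assoc]
  | add X Y hX hY => simp only [mul_add, map_add, hX, hY, add_mul]

lemma cL_comul_mul (x : H) (Y : H ⊗[k] H) :
    cL (Coalgebra.comul (R:=k) x * Y) = Coalgebra.counit (R:=k) x • cL Y := by
  induction Y using TensorProduct.induction_on with
  | zero => simp
  | tmul p q => rw [cL_mul_tmul, cL_comul, central_mul, cL_tmul]
  | add X Y hX hY => simp only [mul_add, map_add, hX, hY, smul_add]

lemma cR_mul_comul (y : H) (X : H ⊗[k] H) :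
    cR (X * Coalgebra.comul (R:=k) y) = Coalgebra.counit (R:=k) y • cR X := by
  induction X using TensorProduct.induction_on with
  | zero => simp
  | tmul p q => rw [cR_tmul_mul, cR_comul, central_mul, cR_tmul]
  | add X Y hX hY => simp only [add_mul, map_add, hX, hY, smul_add]

lemma cL_mul_one_tmul (X : H ⊗[k] H) (c : H) :
    cL (X * ((1:H) ⊗ₜ[k] c)) = cL X * c := by
  induction X using TensorProduct.induction_on with
  | zero => simp
  | tmul r s => simp [Algebra.TensorProduct.tmul_mul_tmul, mul_assoc]
  | add X Y hX hY => simp only [add_mul, map_add, hX, hY]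

lemma cL_dd (Z : H ⊗[k] H) : cL (dd Z) = antipode (R:=k) (eL Z) := by
  induction Z using TensorProduct.induction_on with
  | zero => simp
  | tmul x y =>
    rw [dd_tmul, cL_comul_mul, eL_tmul, map_smul, cL_tmul, antipode_one', one_mul]
  | add X Y hX hY => simp only [map_add, hX, hY]

lemma phi2_mul_tmul (Z W : H ⊗[k] H) (y : H) :
    phi2 ((Z * W) ⊗ₜ[k] y) = Z * (W * ((1:H) ⊗ₜ[k] antipode (R:=k) y)) := by
  induction Z using TensorProduct.induction_on with
  | zero => simp
  | tmul p q =>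
    induction W using TensorProduct.induction_on with
    | zero => simp
    | tmul r s =>
      simp [phi2, Algebra.TensorProduct.tmul_mul_tmul, mul_assoc]
    | add X Y hX hY =>
      simp only [mul_add, add_mul, add_tmul, map_add, hX, hY]
  | add X Y hX hY => simp only [add_mul, mul_add, add_tmul, map_add, hX, hY]

lemma s1 (Z Z' : H ⊗[k] H) :
    phi2 ((Z ⊗ₜ[k] (1:H)) * (TensorProduct.map (Coalgebra.comul) LinearMap.id Z'))
      = Z * dd Z' := by
  induction Z' using TensorProduct.induction_on with
  | zero => simp
  | tmul x y =>
    have : (Z ⊗ₜ[k] (1:H)) * (TensorProduct.map (Coalgebra.comul) LinearMap.id (x ⊗ₜ[k] y))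
        = (Z * Coalgebra.comul (R:=k) x) ⊗ₜ[k] y := by
      simp [Algebra.TensorProduct.tmul_mul_tmul]
    rw [this, phi2_mul_tmul, dd_tmul]
  | add X Y hX hY => simp only [map_add, mul_add, hX, hY]

lemma phi2_assoc_symm (x : H) (M : H ⊗[k] H) :
    phi2 ((TensorProduct.assoc k H H H).symm (x ⊗ₜ[k] M))
      = x ⊗ₜ[k] cR M := by
  have : phi2 ((TensorProduct.assoc k H H H).symm (x ⊗ₜ[k] M))
      = LinearMap.lTensor H cR (x ⊗ₜ[k] M) := by
    simp [phi2, LinearEquiv.apply_symm_apply]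
  rw [this]; simp

lemma s2 (Z Z' : H ⊗[k] H) :
    phi2 ((TensorProduct.assoc k H H H).symm
        (((1:H) ⊗ₜ[k] Z) * (TensorProduct.map LinearMap.id (Coalgebra.comul) Z')))
      = eR Z' ⊗ₜ[k] cR Z := by
  induction Z' using TensorProduct.induction_on with
  | zero => simp
  | tmul x y =>
    have : ((1:H) ⊗ₜ[k] Z) * (TensorProduct.map LinearMap.id (Coalgebra.comul) (x ⊗ₜ[k] y))
        = x ⊗ₜ[k] (Z * Coalgebra.comul (R:=k) y) := by
      simp [Algebra.TensorProduct.tmul_mul_tmul]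
    rw [this, phi2_assoc_symm, cR_mul_comul, eR_tmul, TensorProduct.tmul_smul,
      TensorProduct.smul_tmul']
  | add X Y hX hY => simp only [map_add, mul_add, add_tmul, hX, hY]

lemma psi_mapComul (Z : H ⊗[k] H) :
    psi (TensorProduct.map (Coalgebra.comul) LinearMap.id Z) = eL Z := by
  induction Z using TensorProduct.induction_on with
  | zero => simp
  | tmul x y =>
    have : psi (TensorProduct.map (Coalgebra.comul) LinearMap.id (x ⊗ₜ[k] y))
        = cR (Coalgebra.comul (R:=k) x) * y := by
      simp [psi]
    rw [this, cR_comul, eL_tmul, ← Algebra.smul_def]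
  | add X Y hX hY => simp only [map_add, hX, hY]

lemma C3 (x p q r s : H) (W : H ⊗[k] H) :
    psi (((TensorProduct.assoc k H H H).symm (x ⊗ₜ[k] (W * (p ⊗ₜ[k] q))))
        * ((r ⊗ₜ[k] s) ⊗ₜ[k] (1:H)))
      = x * r * antipode (R:=k) s * antipode (R:=k) p * cL W * q := by
  induction W using TensorProduct.induction_on with
  | zero => simp only [zero_mul, mul_zero, TensorProduct.tmul_zero, map_zero]
  | tmul a b =>
    have h1 : (x ⊗ₜ[k] ((a ⊗ₜ[k] b) * (p ⊗ₜ[k] q))) = x ⊗ₜ[k] ((a*p) ⊗ₜ[k] (b*q)) := by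
      simp [Algebra.TensorProduct.tmul_mul_tmul]
    rw [h1, TensorProduct.assoc_symm_tmul]
    have h2 : ((x ⊗ₜ[k] (a*p)) ⊗ₜ[k] (b*q)) * ((r ⊗ₜ[k] s) ⊗ₜ[k] (1:H))
        = ((x*r) ⊗ₜ[k] ((a*p)*s)) ⊗ₜ[k] ((b*q)*1) := by
      simp [Algebra.TensorProduct.tmul_mul_tmul]
    rw [h2]
    have h3 : psi (((x*r) ⊗ₜ[k] ((a*p)*s)) ⊗ₜ[k] ((b*q)*1))
        = ((x*r) * antipode (R:=k) ((a*p)*s)) * ((b*q)*1) := by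
      simp [psi]
    rw [h3, antipode_mul', antipode_mul', cL_tmul]
    simp [mul_assoc]
  | add X Y hX hY =>
    simp only [add_mul, mul_add, map_add, TensorProduct.tmul_add, TensorProduct.add_tmul,
      hX, hY]

lemma E5b (Z Z' Z'' : H ⊗[k] H) :
    psi (((TensorProduct.assoc k H H H).symm
        ((TensorProduct.map LinearMap.id (Coalgebra.comul) Z) * ((1:H) ⊗ₜ[k] Z')))
        * (Z'' ⊗ₜ[k] (1:H)))
      = eR Z * (cR Z'' * cL Z') := by
  induction Z using TensorProduct.induction_on with
  | zero => simp only [zero_mul, mul_zero, TensorProduct.tmul_zero, TensorProduct.zero_tmul, map_zero]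
  | tmul x y =>
    induction Z' using TensorProduct.induction_on with
    | zero => simp only [zero_mul, mul_zero, TensorProduct.tmul_zero, TensorProduct.zero_tmul, map_zero]
    | tmul p q =>
      induction Z'' using TensorProduct.induction_on with
      | zero => simp only [zero_mul, mul_zero, TensorProduct.tmul_zero, TensorProduct.zero_tmul, map_zero]
      | tmul r s =>
        have h1 : (TensorProduct.map LinearMap.id (Coalgebra.comul) (x ⊗ₜ[k] y))
              * ((1:H) ⊗ₜ[k] (p ⊗ₜ[k] q))
            = x ⊗ₜ[k] (Coalgebra.comul (R:=k) y * (p ⊗ₜ[k] q)) := by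
          simp [Algebra.TensorProduct.tmul_mul_tmul]
        rw [h1, C3, cL_comul, central_mul]
        rw [eR_tmul, cR_tmul, cL_tmul, Algebra.smul_def, Algebra.smul_def]
        simp [mul_assoc, Algebra.commutes]
      | add X Y hX hY =>
        simp only [add_mul, mul_add, map_add, TensorProduct.tmul_add, TensorProduct.add_tmul,
          hX, hY]
    | add X Y hX hY =>
      simp only [add_mul, mul_add, map_add, TensorProduct.tmul_add, TensorProduct.add_tmul,
        hX, hY]
  | add X Y hX hY =>
    simp only [add_mul, mul_add, map_add, TensorProduct.tmul_add, TensorProduct.add_tmul,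
      hX, hY]

variable {F Finv : H ⊗[k] H}

section CoC
variable (h1 : F * Finv = 1) (h2 : Finv * F = 1)
  (h3 : (F ⊗ₜ[k] (1 : H)) * (TensorProduct.map Coalgebra.comul LinearMap.id F) =
    (TensorProduct.assoc k H H H).symm
      (((1 : H) ⊗ₜ[k] F) * (TensorProduct.map LinearMap.id Coalgebra.comul F)))
  (h4 : TensorProduct.map Coalgebra.counit LinearMap.id F = 1)
  (h5 : TensorProduct.map LinearMap.id Coalgebra.counit F = 1)

include h1 h2 h3 in
lemma hCinv :
    (TensorProduct.map Coalgebra.comul LinearMap.id Finv) * (Finv ⊗ₜ[k] (1:H)) =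
    (TensorProduct.assoc k H H H).symm
      ((TensorProduct.map LinearMap.id Coalgebra.comul Finv) * ((1:H) ⊗ₜ[k] Finv)) := by
  set a := F ⊗ₜ[k] (1:H) with ha
  set a' := Finv ⊗ₜ[k] (1:H) with ha'
  set b := TensorProduct.map Coalgebra.comul LinearMap.id F with hb
  set b' := TensorProduct.map Coalgebra.comul LinearMap.id Finv with hb'
  set s := (TensorProduct.assoc k H H H).symm
      (((1:H) ⊗ₜ[k] F) * (TensorProduct.map LinearMap.id Coalgebra.comul F)) with hs
  set s' := (TensorProduct.assoc k H H H).symm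
      ((TensorProduct.map LinearMap.id Coalgebra.comul Finv) * ((1:H) ⊗ₜ[k] Finv)) with hs'
  have ha'a : a' * a = 1 := by
    rw [ha, ha', Algebra.TensorProduct.tmul_mul_tmul, h2, mul_one,
      ← Algebra.TensorProduct.one_def]
  have hbb' : b * b' = 1 := by
    rw [hb, hb', ← mapComulL_eq, ← mapComulL_eq, ← map_mul, h1, map_one]
  have hb'b : b' * b = 1 := by
    rw [hb, hb', ← mapComulL_eq, ← mapComulL_eq, ← map_mul, h2, map_one]
  have hss' : s * s' = 1 := by
    rw [hs, hs', ← assocAlg_symm_eq, ← assocAlg_symm_eq, ← map_mul]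
    have hmid : ((1:H) ⊗ₜ[k] F) * (TensorProduct.map LinearMap.id Coalgebra.comul F) *
        ((TensorProduct.map LinearMap.id Coalgebra.comul Finv) * ((1:H) ⊗ₜ[k] Finv)) = 1 := by
      rw [mul_assoc, ← mul_assoc (TensorProduct.map LinearMap.id Coalgebra.comul F),
        ← mapComulR_eq, ← mapComulR_eq, ← map_mul, h1, map_one, one_mul,
        Algebra.TensorProduct.tmul_mul_tmul, h1, one_mul, ← Algebra.TensorProduct.one_def]
    rw [hmid, map_one]
  have key : b' * a' = s' := by
    have e1 : (a * b) * s' = 1 := by rw [h3, hss']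
    calc b' * a' = (b' * a') * ((a * b) * s') := by rw [e1, mul_one]
      _ = (b' * ((a' * a) * b)) * s' := by simp only [mul_assoc]
      _ = s' := by rw [ha'a, one_mul, hb'b, one_mul]
  exact key

include h1 h2 h3 in
lemma h11 :
    TensorProduct.map Coalgebra.comul LinearMap.id Finv =
    ((TensorProduct.assoc k H H H).symm
      ((TensorProduct.map LinearMap.id Coalgebra.comul Finv) * ((1:H) ⊗ₜ[k] Finv)))
      * (F ⊗ₜ[k] (1:H)) := by
  have key := hCinv (F:=F) (Finv:=Finv) h1 h2 h3
  have ha'a : (Finv ⊗ₜ[k] (1:H)) * (F ⊗ₜ[k] (1:H)) = 1 := by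
    rw [Algebra.TensorProduct.tmul_mul_tmul, h2, mul_one, ← Algebra.TensorProduct.one_def]
  calc TensorProduct.map Coalgebra.comul LinearMap.id Finv
      = TensorProduct.map Coalgebra.comul LinearMap.id Finv *
          ((Finv ⊗ₜ[k] (1:H)) * (F ⊗ₜ[k] (1:H))) := by rw [ha'a, mul_one]
    _ = (TensorProduct.map Coalgebra.comul LinearMap.id Finv * (Finv ⊗ₜ[k] (1:H)))
          * (F ⊗ₜ[k] (1:H)) := by rw [mul_assoc]
    _ = _ := by rw [key]

include h1 h2 h3 h4 h5 in
lemma v_mul_w : cL Finv * cR F = 1 := by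
  have e0 : phi2 ((F ⊗ₜ[k] (1:H)) * (TensorProduct.map Coalgebra.comul LinearMap.id F))
      = phi2 ((TensorProduct.assoc k H H H).symm
        (((1:H) ⊗ₜ[k] F) * (TensorProduct.map LinearMap.id Coalgebra.comul F))) := by rw [h3]
  rw [s1, s2, eR_of_counitR h5] at e0
  have e2 : dd F = Finv * ((1:H) ⊗ₜ[k] cR F) := by
    calc dd F = (Finv * F) * dd F := by rw [h2, one_mul]
      _ = Finv * (F * dd F) := by rw [mul_assoc]
      _ = Finv * ((1:H) ⊗ₜ[k] cR F) := by rw [e0]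
  have e3 := congrArg cL e2
  rw [cL_dd, cL_mul_one_tmul, eL_of_counitL h4, antipode_one'] at e3
  exact e3.symm

include h1 h2 h3 h4 h5 in
lemma w_mul_v : cR F * cL Finv = 1 := by
  have e0 := congrArg psi (h11 (F:=F) (Finv:=Finv) h1 h2 h3)
  rw [psi_mapComul, E5b, eL_of_counitL (counitL_Finv h1 h2 h4),
    eR_of_counitR (counitR_Finv h1 h2 h5), one_mul] at e0
  exact e0.symm

end CoC
end Twist

section Rep
set_option linter.unusedSectionVars false
open Coalgebra

variable {A : Type} [Ring A] [Algebra k A]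

/-- Right multiplication by `u(·)` as an algebra hom on the opposite. -/
def Rop (u : H →ₐ[k] A) : Hᵐᵒᵖ →ₐ[k] Module.End k A :=
  AlgHom.ofLinearMap
    ((LinearMap.mul k A).flip ∘ₗ u.toLinearMap ∘ₗ (MulOpposite.opLinearEquiv k).symm.toLinearMap)
    (by ext a; simp)
    (by
      intro x y
      ext a
      simp [Module.End.mul_apply, mul_assoc])

@[simp] lemma Rop_apply (u : H →ₐ[k] A) (x : Hᵐᵒᵖ) (a : A) :
    Rop u x a = a * u x.unop := by
  simp [Rop]

/-- The sandwich representation `H ⊗ Hᵐᵒᵖ → End A`. -/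
def Psi (u : H →ₐ[k] A) : (H ⊗[k] Hᵐᵒᵖ) →ₐ[k] Module.End k A :=
  Algebra.TensorProduct.lift ((Algebra.lmul k A).comp u) (Rop u)
    (by
      intro x y
      show _ = _
      ext a
      simp [Module.End.mul_apply, mul_assoc])

@[simp] lemma Psi_tmul_apply (u : H →ₐ[k] A) (x : H) (m : Hᵐᵒᵖ) (a : A) :
    Psi u (x ⊗ₜ[k] m) a = u x * (a * u m.unop) := by
  simp [Psi, Algebra.TensorProduct.lift_tmul, Module.End.mul_apply]

/-- Antipode into the opposite algebra, as an algebra hom. -/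
def SopAlg : H →ₐ[k] Hᵐᵒᵖ :=
  AlgHom.ofLinearMap
    ((MulOpposite.opLinearEquiv k).toLinearMap ∘ₗ antipode (R:=k))
    (by simp [antipode_one'])
    (by
      intro x y
      simp [antipode_mul'])

@[simp] lemma SopAlg_apply (x : H) : SopAlg (k:=k) x = MulOpposite.op (antipode (R:=k) x) := rfl

/-- `id ⊗ (op ∘ S)` as an algebra hom `H⊗H → H⊗Hᵐᵒᵖ`. -/
def nuS : H ⊗[k] H →ₐ[k] H ⊗[k] Hᵐᵒᵖ :=
  Algebra.TensorProduct.map (AlgHom.id k H) SopAlg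

@[simp] lemma nuS_tmul (x y : H) :
    nuS (k:=k) (x ⊗ₜ[k] y) = x ⊗ₜ[k] MulOpposite.op (antipode (R:=k) y) := rfl

/-- `(x⊗y)⊗z ↦ x ⊗ op(S(y)·z)`. -/
def Xi : (H ⊗[k] H) ⊗[k] H →ₗ[k] H ⊗[k] Hᵐᵒᵖ :=
  LinearMap.lTensor H ((MulOpposite.opLinearEquiv k).toLinearMap ∘ₗ cL)
    ∘ₗ (TensorProduct.assoc k H H H).toLinearMap

@[simp] lemma Xi_tmul (x y z : H) :
    Xi ((x ⊗ₜ[k] y) ⊗ₜ[k] z) = x ⊗ₜ[k] MulOpposite.op (antipode (R:=k) y * z) := by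
  simp [Xi]

/-- `x⊗y ↦ Σ x₁ ⊗ op(S(x₂)·y)`. -/
def Tmap : H ⊗[k] H →ₗ[k] H ⊗[k] Hᵐᵒᵖ :=
  Xi ∘ₗ (Coalgebra.comul (R:=k) (A:=H)).rTensor H

lemma Tmap_tmul (x y : H) :
    Tmap (k:=k) (x ⊗ₜ[k] y) = Xi ((Coalgebra.comul (R:=k) x) ⊗ₜ[k] y) := by
  simp [Tmap]

lemma X1 (W Z' : H ⊗[k] H) (y : H) :
    Xi ((W * Z') ⊗ₜ[k] y) = Xi (W ⊗ₜ[k] y) * nuS (k:=k) Z' := by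
  induction W using TensorProduct.induction_on with
  | zero => simp only [zero_mul, TensorProduct.zero_tmul, map_zero]
  | tmul r s =>
    induction Z' using TensorProduct.induction_on with
    | zero => simp only [mul_zero, TensorProduct.zero_tmul, map_zero]
    | tmul p q =>
      rw [Algebra.TensorProduct.tmul_mul_tmul, Xi_tmul, Xi_tmul, nuS_tmul,
        Algebra.TensorProduct.tmul_mul_tmul, antipode_mul']
      rw [show MulOpposite.op (antipode (R:=k) s * y) * MulOpposite.op (antipode (R:=k) q)
          = MulOpposite.op (antipode (R:=k) q * (antipode (R:=k) s * y)) by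
        rw [← MulOpposite.op_mul]]
      rw [mul_assoc]
    | add X Y hX hY =>
      simp only [mul_add, TensorProduct.add_tmul, map_add, hX, hY]
  | add X Y hX hY =>
    simp only [add_mul, TensorProduct.add_tmul, map_add, hX, hY]

lemma E3a (Z Z' : H ⊗[k] H) :
    Xi ((TensorProduct.map (Coalgebra.comul) LinearMap.id Z) * (Z' ⊗ₜ[k] (1:H)))
      = Tmap (k:=k) Z * nuS (k:=k) Z' := by
  induction Z using TensorProduct.induction_on with
  | zero => simp only [map_zero, zero_mul]
  | tmul x y =>
    have : (TensorProduct.map (Coalgebra.comul) LinearMap.id (x ⊗ₜ[k] y)) * (Z' ⊗ₜ[k] (1:H))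
        = ((Coalgebra.comul (R:=k) x) * Z') ⊗ₜ[k] y := by
      simp [Algebra.TensorProduct.tmul_mul_tmul]
    rw [this, X1, Tmap_tmul]
  | add X Y hX hY => simp only [map_add, add_mul, hX, hY]

lemma Xi_assoc_symm (x : H) (M : H ⊗[k] H) :
    Xi ((TensorProduct.assoc k H H H).symm (x ⊗ₜ[k] M))
      = x ⊗ₜ[k] MulOpposite.op (cL M) := by
  have : Xi ((TensorProduct.assoc k H H H).symm (x ⊗ₜ[k] M))
      = LinearMap.lTensor H ((MulOpposite.opLinearEquiv k).toLinearMap ∘ₗ cL) (x ⊗ₜ[k] M) := by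
    simp [Xi, LinearEquiv.apply_symm_apply]
  rw [this]; simp

lemma E3b (Z Z' : H ⊗[k] H) :
    Xi ((TensorProduct.assoc k H H H).symm
        ((TensorProduct.map LinearMap.id (Coalgebra.comul) Z) * ((1:H) ⊗ₜ[k] Z')))
      = eR Z ⊗ₜ[k] MulOpposite.op (cL Z') := by
  induction Z using TensorProduct.induction_on with
  | zero => simp only [map_zero, zero_mul, TensorProduct.zero_tmul]
  | tmul x y =>
    have : (TensorProduct.map LinearMap.id (Coalgebra.comul) (x ⊗ₜ[k] y)) * ((1:H) ⊗ₜ[k] Z')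
        = x ⊗ₜ[k] ((Coalgebra.comul (R:=k) y) * Z') := by
      simp [Algebra.TensorProduct.tmul_mul_tmul]
    rw [this, Xi_assoc_symm, cL_comul_mul, eR_tmul, MulOpposite.op_smul,
      TensorProduct.tmul_smul, TensorProduct.smul_tmul']
  | add X Y hX hY => simp only [map_add, add_mul, TensorProduct.add_tmul, hX, hY]

end Rep

section Rep2
set_option linter.unusedSectionVars false
open Coalgebra

variable {A : Type} [Ring A] [Algebra k A]

lemma eta_eq (ma : ModuleAlgebra k H A) (u : H →ₐ[k] A) (Z : H ⊗[k] H) (c : A) :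
    kulishMudrovEta ma u Z c =
      (LinearMap.mul' k A
        ∘ₗ TensorProduct.map (TensorProduct.lift ma.act) u.toLinearMap
        ∘ₗ (TensorProduct.assoc k H A H).symm.toLinearMap
        ∘ₗ TensorProduct.map LinearMap.id (TensorProduct.comm k H A).toLinearMap
        ∘ₗ (TensorProduct.assoc k H H A).toLinearMap) (Z ⊗ₜ[k] c) := rfl

lemma eta_tmul (ma : ModuleAlgebra k H A) (u : H →ₐ[k] A) (x y : H) (c : A) :
    kulishMudrovEta ma u (x ⊗ₜ[k] y) c = ma.act x c * u y := by
  rw [eta_eq]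
  simp

lemma eta_add (ma : ModuleAlgebra k H A) (u : H →ₐ[k] A) (Z Z' : H ⊗[k] H) (c : A) :
    kulishMudrovEta ma u (Z + Z') c =
      kulishMudrovEta ma u Z c + kulishMudrovEta ma u Z' c := by
  rw [eta_eq, eta_eq, eta_eq, ← map_add, ← TensorProduct.add_tmul]

lemma eta_zero (ma : ModuleAlgebra k H A) (u : H →ₐ[k] A) (c : A) :
    kulishMudrovEta ma u (0 : H ⊗[k] H) c = 0 := by
  rw [eta_eq, show ((0 : H ⊗[k] H) ⊗ₜ[k] c) = (0 : (H ⊗[k] H) ⊗[k] A) from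
    TensorProduct.zero_tmul _ c, map_zero]

lemma twistedMul_tmul (ma : ModuleAlgebra k H A) (p q : H) (a b : A) :
    twistedMul ma (p ⊗ₜ[k] q) (a ⊗ₜ[k] b) = ma.act p a * ma.act q b := by
  simp [twistedMul, legAct]

lemma twistedMul_addF (ma : ModuleAlgebra k H A) (Z Z' : H ⊗[k] H) (t : A ⊗[k] A) :
    twistedMul ma (Z + Z') t = twistedMul ma Z t + twistedMul ma Z' t := by
  simp [twistedMul, legAct, map_add]

lemma twistedMul_zeroF (ma : ModuleAlgebra k H A) (t : A ⊗[k] A) :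
    twistedMul ma (0 : H ⊗[k] H) t = 0 := by
  simp [twistedMul, legAct]

/-- The trilinear contraction `(x⊗y)⊗z ↦ (x▷a)(y▷b)u(z)`. -/
def theta (ma : ModuleAlgebra k H A) (u : H →ₐ[k] A) (a b : A) :
    (H ⊗[k] H) ⊗[k] H →ₗ[k] A :=
  LinearMap.mul' k A ∘ₗ (LinearMap.mul' k A).rTensor A
    ∘ₗ TensorProduct.map (TensorProduct.map (ma.act.flip a) (ma.act.flip b)) u.toLinearMap

@[simp] lemma theta_tmul (ma : ModuleAlgebra k H A) (u : H →ₐ[k] A) (a b : A) (x y z : H) :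
    theta ma u a b ((x ⊗ₜ[k] y) ⊗ₜ[k] z) = ma.act x a * ma.act y b * u z := by
  simp [theta]

lemma M1 (ma : ModuleAlgebra k H A) (u : H →ₐ[k] A) (Z Z' : H ⊗[k] H) (a b : A) :
    kulishMudrovEta ma u Z (twistedMul ma Z' (a ⊗ₜ[k] b))
      = theta ma u a b ((TensorProduct.map (Coalgebra.comul) LinearMap.id Z)
          * (Z' ⊗ₜ[k] (1:H))) := by
  induction Z using TensorProduct.induction_on with
  | zero => rw [eta_zero]; simp only [map_zero, zero_mul, map_zero]
  | tmul x y =>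
    induction Z' using TensorProduct.induction_on with
    | zero =>
      rw [twistedMul_zeroF]
      have h0 : ((0:H ⊗[k] H) ⊗ₜ[k] (1:H)) = (0 : (H ⊗[k] H) ⊗[k] H) := by
        simp
      rw [map_zero, h0, mul_zero, map_zero]
    | tmul p q =>
      rw [twistedMul_tmul, eta_tmul, ma.act_algebra_mul]
      have hprod : (TensorProduct.map (Coalgebra.comul) LinearMap.id (x ⊗ₜ[k] y))
            * ((p ⊗ₜ[k] q) ⊗ₜ[k] (1:H))
          = ((Coalgebra.comul (R:=k) x) * (p ⊗ₜ[k] q)) ⊗ₜ[k] y := by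
        simp [Algebra.TensorProduct.tmul_mul_tmul]
      rw [hprod]
      generalize Coalgebra.comul (R:=k) x = W
      induction W using TensorProduct.induction_on with
      | zero => simp
      | tmul r s =>
        rw [Algebra.TensorProduct.tmul_mul_tmul, theta_tmul]
        have h1 : TensorProduct.map ma.act ma.act (r ⊗ₜ[k] s) = ma.act r ⊗ₜ[k] ma.act s := rfl
        rw [h1, TensorProduct.homTensorHomMap_apply]
        have h2 : TensorProduct.map (ma.act r) (ma.act s) ((ma.act p a) ⊗ₜ[k] (ma.act q b))
            = (ma.act r (ma.act p a)) ⊗ₜ[k] (ma.act s (ma.act q b)) := rfl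
        rw [h2]
        have h3 : ma.act r (ma.act p a) = ma.act (r * p) a := by
          rw [ma.act_mul]; rfl
        have h4 : ma.act s (ma.act q b) = ma.act (s * q) b := by
          rw [ma.act_mul]; rfl
        simp [h3, h4]
      | add X Y hX hY =>
        simp only [map_add, LinearMap.add_apply, add_mul, TensorProduct.add_tmul, hX, hY]
    | add X Y hX hY =>
      simp only [twistedMul_addF, map_add, TensorProduct.add_tmul, mul_add, hX, hY]
  | add X Y hX hY =>
    rw [eta_add, hX, hY, map_add, add_mul, map_add]


lemma eR_comul (y : H) : eR (Coalgebra.comul (R:=k) y) = y := by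
  have h2 := LinearMap.congr_fun (Coalgebra.lTensor_counit_comp_comul (R:=k) (A:=H)) y
  simp only [LinearMap.comp_apply] at h2
  simp [eR, h2]

lemma Klem (ma : ModuleAlgebra k H A) (u : H →ₐ[k] A) (hadj : ma.act = adjointAction u)
    (y : H) (c : A) :
    u y * c = LinearMap.mul' k A
      (TensorProduct.map (ma.act.flip c) u.toLinearMap (Coalgebra.comul (R:=k) y)) := by
  set G' : H ⊗[k] H →ₗ[k] Module.End k A :=
    LinearMap.mul' k (Module.End k A)
      ∘ₗ TensorProduct.map (LinearMap.mul k A ∘ₗ u.toLinearMap)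
          ((LinearMap.mul k A).flip ∘ₗ u.toLinearMap ∘ₗ HopfAlgebra.antipode (R := k)) with hG'
  have hact : ∀ r : H, ma.act r = G' (Coalgebra.comul (R:=k) r) := by
    intro r
    rw [hadj]
    rfl
  have step1 : TensorProduct.map (ma.act.flip c) u.toLinearMap
      = (TensorProduct.map ((LinearMap.applyₗ c) ∘ₗ G') u.toLinearMap)
        ∘ₗ (Coalgebra.comul (R:=k) (A:=H)).rTensor H := by
    apply TensorProduct.ext'
    intro r s
    simp [hact]
  rw [step1]
  have step2 : (LinearMap.mul' k A)
      ∘ₗ (TensorProduct.map ((LinearMap.applyₗ c) ∘ₗ G') u.toLinearMap)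
      ∘ₗ (TensorProduct.assoc k H H H).symm.toLinearMap
      = (LinearMap.mul' k A) ∘ₗ TensorProduct.map
          (LinearMap.mulRight k c ∘ₗ u.toLinearMap) (u.toLinearMap ∘ₗ cL) := by
    apply TensorProduct.ext'
    intro x M
    induction M using TensorProduct.induction_on with
    | zero => simp
    | tmul r s =>
      simp [hG', Module.End.mul_apply, mul_assoc]
    | add X Y hX hY =>
      simp only [TensorProduct.tmul_add, map_add, hX, hY]
  have step34 : (LinearMap.mul' k A) ∘ₗ TensorProduct.map
        (LinearMap.mulRight k c ∘ₗ u.toLinearMap) (u.toLinearMap ∘ₗ cL)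
      ∘ₗ (Coalgebra.comul (R:=k) (A:=H)).lTensor H
      = (LinearMap.mulRight k c) ∘ₗ u.toLinearMap ∘ₗ eR := by
    apply TensorProduct.ext'
    intro x z
    simp [cL_comul, Algebra.algebraMap_eq_smul_one, mul_smul_comm]
  rw [LinearMap.comp_apply, ← Coalgebra.coassoc_symm_apply]
  have h2 := LinearMap.congr_fun step2
    ((Coalgebra.comul (R:=k) (A:=H)).lTensor H (Coalgebra.comul (R:=k) y))
  simp only [LinearMap.comp_apply, LinearEquiv.coe_coe] at h2
  rw [h2]
  have h34 := LinearMap.congr_fun step34 (Coalgebra.comul (R:=k) y)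
  simp only [LinearMap.comp_apply] at h34
  rw [h34, eR_comul]
  simp

lemma M2 (ma : ModuleAlgebra k H A) (u : H →ₐ[k] A) (hadj : ma.act = adjointAction u)
    (Z Z' : H ⊗[k] H) (a b : A) :
    kulishMudrovEta ma u Z a * kulishMudrovEta ma u Z' b
      = theta ma u a b ((TensorProduct.assoc k H H H).symm
          ((TensorProduct.map LinearMap.id (Coalgebra.comul) Z) * ((1:H) ⊗ₜ[k] Z'))) := by
  induction Z using TensorProduct.induction_on with
  | zero => rw [eta_zero]; simp
  | tmul x y =>
    induction Z' using TensorProduct.induction_on with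
    | zero => rw [eta_zero]; simp
    | tmul p q =>
      rw [eta_tmul, eta_tmul]
      have hprod : (TensorProduct.map LinearMap.id (Coalgebra.comul) (x ⊗ₜ[k] y))
            * ((1:H) ⊗ₜ[k] (p ⊗ₜ[k] q))
          = x ⊗ₜ[k] ((Coalgebra.comul (R:=k) y) * (p ⊗ₜ[k] q)) := by
        simp [Algebra.TensorProduct.tmul_mul_tmul]
      rw [hprod]
      have key : ∀ W : H ⊗[k] H,
          theta ma u a b ((TensorProduct.assoc k H H H).symm (x ⊗ₜ[k] (W * (p ⊗ₜ[k] q))))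
          = ma.act x a * (LinearMap.mul' k A
              (TensorProduct.map (ma.act.flip (ma.act p b)) u.toLinearMap W) * u q) := by
        intro W
        induction W using TensorProduct.induction_on with
        | zero => simp
        | tmul r s =>
          rw [Algebra.TensorProduct.tmul_mul_tmul, TensorProduct.assoc_symm_tmul, theta_tmul]
          have h3 : ma.act (r * p) b = ma.act r (ma.act p b) := by
            rw [ma.act_mul]; rfl
          simp [h3, mul_assoc]
        | add X Y hX hY =>
          simp only [add_mul, TensorProduct.tmul_add, map_add, LinearMap.add_apply,
            mul_add, add_mul, hX, hY]
      rw [key, ← Klem ma u hadj y (ma.act p b)]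
      simp [mul_assoc]
    | add X Y hX hY =>
      simp only [eta_add, map_add, mul_add, add_mul, TensorProduct.tmul_add, hX, hY]
  | add X Y hX hY =>
    simp only [eta_add, map_add, mul_add, add_mul, TensorProduct.tmul_add, hX, hY]

lemma EtaPsi (ma : ModuleAlgebra k H A) (u : H →ₐ[k] A) (hadj : ma.act = adjointAction u)
    (Z : H ⊗[k] H) (a : A) :
    kulishMudrovEta ma u Z a = Psi u (Tmap (k:=k) Z) a := by
  induction Z using TensorProduct.induction_on with
  | zero => rw [eta_zero]; simp
  | tmul x y =>
    rw [eta_tmul, Tmap_tmul]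
    have hact : ma.act x a = LinearMap.mul' k (Module.End k A)
        (TensorProduct.map (LinearMap.mul k A ∘ₗ u.toLinearMap)
          ((LinearMap.mul k A).flip ∘ₗ u.toLinearMap ∘ₗ HopfAlgebra.antipode (R := k))
          (Coalgebra.comul (R:=k) x)) a := by
      rw [hadj]; rfl
    rw [hact]
    generalize Coalgebra.comul (R:=k) x = W
    induction W using TensorProduct.induction_on with
    | zero => simp
    | tmul r s =>
      rw [Xi_tmul, Psi_tmul_apply]
      simp [Module.End.mul_apply, mul_assoc]
    | add X Y hX hY =>
      simp only [map_add, LinearMap.add_apply, add_mul, TensorProduct.add_tmul, hX, hY]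
  | add X Y hX hY =>
    simp only [eta_add, map_add, LinearMap.add_apply, hX, hY]

lemma eta_one (ma : ModuleAlgebra k H A) (u : H →ₐ[k] A) (Z : H ⊗[k] H) :
    kulishMudrovEta ma u Z 1 = u (eL Z) := by
  induction Z using TensorProduct.induction_on with
  | zero => rw [eta_zero]; simp
  | tmul x y =>
    rw [eta_tmul, ma.act_algebra_unit, eL_tmul]
    simp [Algebra.smul_def]
  | add X Y hX hY => simp only [eta_add, map_add, hX, hY]

end Rep2

end KMAux

/-- If `H` acts adjointly on `A` via `u : H → A` and `F` is a counital 2-cocycle, then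
`η : A_F → A`, `a ↦ (f' ▷ a)·u(f'')`, is an isomorphism of algebras. -/
theorem twist_iso_of_adjoint {A : Type} [Ring A] [Algebra k A]
    (ma : ModuleAlgebra k H A) (u : H →ₐ[k] A) (hadj : ma.act = adjointAction u)
    (F Finv : H ⊗[k] H) (hF : IsCocycle k H F Finv) :
    Function.Bijective (kulishMudrovEta ma u Finv) ∧
    (∀ a b : A,
      kulishMudrovEta ma u Finv (twistedMul ma Finv (a ⊗ₜ[k] b)) =
        kulishMudrovEta ma u Finv a * kulishMudrovEta ma u Finv b) ∧
    kulishMudrovEta ma u Finv (1 : A) = 1 := by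
  obtain ⟨h1, h2, h3, h4, h5⟩ := hF
  refine ⟨?_, ?_, ?_⟩
  · -- bijectivity
    have hTY : Tmap (k:=k) Finv * nuS (k:=k) Finv
        = (1:H) ⊗ₜ[k] MulOpposite.op (cL Finv) := by
      rw [← E3a, hCinv h1 h2 h3, E3b, eR_of_counitR (counitR_Finv h1 h2 h5)]
    have hYZ : nuS (k:=k) Finv * nuS (k:=k) F = 1 := by rw [← map_mul, h2, map_one]
    have hZY : nuS (k:=k) F * nuS (k:=k) Finv = 1 := by rw [← map_mul, h1, map_one]
    have hvw := v_mul_w h1 h2 h3 h4 h5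
    have hwv := w_mul_v h1 h2 h3 h4 h5
    set Tb := Tmap (k:=k) Finv with hTb
    set Yb := nuS (k:=k) Finv with hYb
    set Zb := nuS (k:=k) F with hZb
    set vO : Hᵐᵒᵖ := MulOpposite.op (cL Finv) with hvO
    set wO : Hᵐᵒᵖ := MulOpposite.op (cR F) with hwO
    have hvwO : vO * wO = 1 := by
      rw [hvO, hwO, show MulOpposite.op (cL Finv) * MulOpposite.op (cR F)
        = MulOpposite.op (cR F * cL Finv) from (MulOpposite.op_mul _ _).symm, hwv,
        MulOpposite.op_one]
    have hwvO : wO * vO = 1 := by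
      rw [hvO, hwO, show MulOpposite.op (cR F) * MulOpposite.op (cL Finv)
        = MulOpposite.op (cL Finv * cR F) from (MulOpposite.op_mul _ _).symm, hvw,
        MulOpposite.op_one]
    have h1v : ((1:H) ⊗ₜ[k] vO) * ((1:H) ⊗ₜ[k] wO) = 1 := by
      rw [Algebra.TensorProduct.tmul_mul_tmul, one_mul, hvwO, ← Algebra.TensorProduct.one_def]
    have h1w : ((1:H) ⊗ₜ[k] wO) * ((1:H) ⊗ₜ[k] vO) = 1 := by
      rw [Algebra.TensorProduct.tmul_mul_tmul, one_mul, hwvO, ← Algebra.TensorProduct.one_def]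
    have hTfact : Tb = ((1:H) ⊗ₜ[k] vO) * Zb := by
      calc Tb = Tb * (Yb * Zb) := by rw [hYZ, mul_one]
        _ = (Tb * Yb) * Zb := by rw [mul_assoc]
        _ = _ := by rw [hTY]
    set Rb := Yb * ((1:H) ⊗ₜ[k] wO) with hRb
    have hTR : Tb * Rb = 1 := by
      calc Tb * Rb = (Tb * Yb) * ((1:H) ⊗ₜ[k] wO) := by rw [hRb, mul_assoc]
        _ = 1 := by rw [hTY, h1v]
    have hRT : Rb * Tb = 1 := by
      calc Rb * Tb = Yb * (((1:H) ⊗ₜ[k] wO) * (((1:H) ⊗ₜ[k] vO) * Zb)) := by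
            rw [hTfact, hRb, mul_assoc]
        _ = Yb * Zb := by rw [← mul_assoc ((1:H) ⊗ₜ[k] wO), h1w, one_mul]
        _ = 1 := hYZ
    have hE1 : Psi u Tb * Psi u Rb = 1 := by rw [← map_mul, hTR, map_one]
    have hE2 : Psi u Rb * Psi u Tb = 1 := by rw [← map_mul, hRT, map_one]
    refine Function.bijective_iff_has_inverse.mpr ⟨fun a => Psi u Rb a, ?_, ?_⟩
    · intro a
      show Psi u Rb (kulishMudrovEta ma u Finv a) = a
      rw [EtaPsi ma u hadj, ← Module.End.mul_apply, hE2, Module.End.one_apply]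
    · intro a
      show kulishMudrovEta ma u Finv (Psi u Rb a) = a
      rw [EtaPsi ma u hadj, ← Module.End.mul_apply, hE1, Module.End.one_apply]
  · -- multiplicativity
    intro a b
    rw [M1 ma u Finv Finv a b, M2 ma u hadj Finv Finv a b, hCinv h1 h2 h3]
  · -- unit
    rw [eta_one, eL_of_counitL (counitL_Finv h1 h2 h4), map_one]

end
end

section
/- Let H be a Hopf algebra, A an H-module algebra with adjoint action via u : H → A, F a counital 2-cocycle, and V an A-module with action ▷_A. Define the H-action on V by h ▷ v = u(h) ▷_A v. Then V is an (H,A)-module, and the Giaquinto–Zhang twisted action ▷_F = ▷_A ∘ (F⁻¹ ▷ -) of A_F on V equals the pullback of ▷_A along the isomorphism η : A_F → A, i.e. a ▷_F v = η(a) ▷_A v for all a ∈ A, v ∈ V. -/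
open TensorProduct LinearMap

noncomputable section

variable (k : Type) [Field k]
variable (H : Type) [Ring H] [HopfAlgebra k H]

variable {k H}

section Aux

/-- Expansion of the adjoint action on an element with a chosen comul representation. -/
lemma adjointAction_apply_repr {A : Type} [Ring A] [Algebra k A] (u : H →ₐ[k] A)
    {ι : Type*} (x : H) (a : A) (rx : Coalgebra.Repr k x ι) :
    adjointAction u x a =
      ∑ j ∈ rx.index,
        u (rx.left j) * (a * u (HopfAlgebra.antipode (R := k) (rx.right j))) := by
  rw [adjointAction]
  simp only [LinearMap.comp_apply]
  rw [show Coalgebra.comul x = ∑ j ∈ rx.index, rx.left j ⊗ₜ[k] rx.right j from rx.eq.symm]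
  simp [LinearMap.mul'_apply, LinearMap.mul_apply', Module.End.mul_apply,
    TensorProduct.map_tmul, map_sum, LinearMap.sum_apply]

/-- Σ ε(h₂) • h₁ = h for any comul representation. -/
lemma sum_counit_smul {ι : Type*} {h : H} (r : Coalgebra.Repr k h ι) :
    ∑ i ∈ r.index, (Coalgebra.counit (R := k) (r.right i)) • r.left i = h := by
  have h1 := congrArg (TensorProduct.rid k H) (Coalgebra.sum_tmul_counit_eq r)
  rw [map_sum] at h1
  simp only [TensorProduct.rid_tmul, one_smul] at h1
  exact h1

/-- The key Kulish–Mudrov identity: Σ (h₁ ▷ a) · u(h₂) = u(h) · a for the adjoint action. -/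
lemma adjoint_smash {A : Type} [Ring A] [Algebra k A] (u : H →ₐ[k] A)
    {ι : Type*} (h : H) (a : A) (r : Coalgebra.Repr k h ι) :
    ∑ i ∈ r.index, adjointAction u (r.left i) a * u (r.right i) = u h * a := by
  classical
  let r1 : ∀ i : ι, Coalgebra.Repr k (r.left i) (H × H) := fun i => Coalgebra.Repr.arbitrary k (r.left i)
  let r2 : ∀ i : ι, Coalgebra.Repr k (r.right i) (H × H) :=
    fun i => Coalgebra.Repr.arbitrary k (r.right i)
  have key := Coalgebra.sum_tmul_tmul_eq r r1 r2
  -- the trilinear collapse map  x ⊗ (y ⊗ z) ↦ (u x * a) * (u (S y) * u z)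
  set Φ : H ⊗[k] (H ⊗[k] H) →ₗ[k] A :=
    LinearMap.mul' k A
      ∘ₗ TensorProduct.map (LinearMap.mulRight k a ∘ₗ u.toLinearMap)
          (LinearMap.mul' k A
            ∘ₗ TensorProduct.map (u.toLinearMap ∘ₗ HopfAlgebra.antipode (R := k)) u.toLinearMap)
    with hΦ
  have hΦt : ∀ x y z : H, Φ (x ⊗ₜ[k] (y ⊗ₜ[k] z)) =
      (u x * a) * (u (HopfAlgebra.antipode (R := k) y) * u z) := by
    intro x y z
    simp [hΦ, LinearMap.mul'_apply]
  have key2 := congrArg Φ key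
  simp only [map_sum, hΦt] at key2
  calc
    ∑ i ∈ r.index, adjointAction u (r.left i) a * u (r.right i)
        = ∑ i ∈ r.index, ∑ j ∈ (r1 i).index,
            (u ((r1 i).left j) * a) *
              (u (HopfAlgebra.antipode (R := k) ((r1 i).right j)) * u (r.right i)) := by
          refine Finset.sum_congr rfl fun i _ => ?_
          rw [adjointAction_apply_repr u _ a (r1 i), Finset.sum_mul]
          refine Finset.sum_congr rfl fun j _ => ?_
          simp [mul_assoc]
    _ = ∑ i ∈ r.index, ∑ j ∈ (r2 i).index,
            (u (r.left i) * a) *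
              (u (HopfAlgebra.antipode (R := k) ((r2 i).left j)) * u ((r2 i).right j)) := key2
    _ = ∑ i ∈ r.index, (u (r.left i) * a) *
            u (∑ j ∈ (r2 i).index,
                HopfAlgebra.antipode (R := k) ((r2 i).left j) * (r2 i).right j) := by
          refine Finset.sum_congr rfl fun i _ => ?_
          simp only [map_sum, Finset.mul_sum, map_mul]
    _ = ∑ i ∈ r.index, (Coalgebra.counit (R := k) (r.right i)) • (u (r.left i) * a) := by
          refine Finset.sum_congr rfl fun i _ => ?_
          rw [HopfAlgebra.sum_antipode_mul_eq_algebraMap_counit (r2 i)]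
          simp [AlgHom.commutes, Algebra.smul_def, ← Algebra.commutes, mul_assoc]
    _ = u h * a := by
          conv_rhs => rw [← sum_counit_smul r]
          simp [map_sum, Finset.sum_mul, smul_mul_assoc, map_smul]

end Aux

/-- If `H` acts adjointly on `A` via `u` and `V` is an `A`-module, then pulling the
`A`-action back along `u` makes `V` an `(H,A)`-module, and the Giaquinto–Zhang twisted
action of `A_F` on `V` equals the pullback of the `A`-action along `η : A_F → A`. -/
theorem twistedAct_eq_pullback_eta {A V : Type} [Ring A] [Algebra k A]
    [AddCommGroup V] [Module k V]
    (ma : ModuleAlgebra k H A) (u : H →ₐ[k] A) (hadj : ma.act = adjointAction u)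
    (F Finv : H ⊗[k] H) (hF : IsCocycle k H F Finv)
    (ρA : AlgRep (k := k) A V) :
    ∃ ρH : AlgRep (k := k) H V,
      ρH.ρ = ρA.ρ ∘ₗ u.toLinearMap ∧
      IsHAModule ma ρA ρH ∧
      (∀ (a : A) (v : V),
        twistedAct ma ρA ρH Finv a v = ρA.ρ (kulishMudrovEta ma u Finv a) v) := by
  classical
  refine ⟨⟨ρA.ρ ∘ₗ u.toLinearMap, ?_, ?_⟩, rfl, ?_, ?_⟩
  · simp [ρA.ρ_one]
  · intro a b; simp [map_mul, ρA.ρ_mul]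
  · intro h a v
    rw [hadj]
    let r := Coalgebra.Repr.arbitrary k h
    have hc : (Coalgebra.comul (R := k) h) = ∑ i ∈ r.index, r.left i ⊗ₜ[k] r.right i := r.eq.symm
    simp only [legAct, hc, map_sum, LinearMap.sum_apply, LinearMap.comp_apply,
      TensorProduct.map_tmul, TensorProduct.homTensorHomMap_apply, TensorProduct.lift.tmul,
      LinearMap.coe_comp, Function.comp_apply, AlgHom.toLinearMap_apply]
    have step : ∀ i ∈ r.index,
        ρA.ρ (adjointAction u (r.left i) a) (ρA.ρ (u (r.right i)) v)
          = ρA.ρ (adjointAction u (r.left i) a * u (r.right i)) v := by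
      intro i _
      rw [ρA.ρ_mul]
      rfl
    rw [Finset.sum_congr rfl step]
    have : ∑ i ∈ r.index, ρA.ρ (adjointAction u (r.left i) a * u (r.right i)) v
        = ρA.ρ (∑ i ∈ r.index, adjointAction u (r.left i) a * u (r.right i)) v := by
      rw [map_sum, LinearMap.sum_apply]
    rw [this, adjoint_smash u h a r, ρA.ρ_mul]
    rfl
  · clear hF
    intro a v
    simp only [twistedAct, kulishMudrovEta, legAct, TensorProduct.curry_apply,
      LinearMap.comp_apply, TensorProduct.mk_apply]
    induction Finv using TensorProduct.induction_on with
    | zero =>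
        simp only [TensorProduct.zero_tmul, map_zero, LinearMap.zero_apply,
          LinearEquiv.map_zero]
    | tmul x y =>
        simp [TensorProduct.homTensorHomMap_apply, TensorProduct.assoc_tmul,
          TensorProduct.assoc_symm_tmul, TensorProduct.comm_tmul, LinearMap.mul'_apply,
          ρA.ρ_mul]
    | add p q hp hq =>
        simp only [map_add, LinearMap.add_apply, TensorProduct.add_tmul] at hp hq ⊢
        rw [hp, hq]


end
end

section
/- Let C = A·B be an algebra factorisation in the category of H-modules (C an H-module algebra, A, B H-module subalgebras, and multiplication restricting to a linear isomorphism A⊗B ≅ C), and let F be a counital 2-cocycle on H. Then the cocycle twist C_F admits the algebra factorisation C_F = A_F · B_F, and the associated braiding map satisfies Ψ_{C_F} = (F▷) ∘ Ψ_C ∘ (F⁻¹▷). -/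
open TensorProduct LinearMap

noncomputable section

variable (k : Type) [Field k]
variable (H : Type) [Ring H] [HopfAlgebra k H]

variable {k H}

/-- The multiplication map of `C` restricted to `A ⊗ B` along the inclusions. -/
def resMul {C A B : Type} [Ring C] [Algebra k C] [AddCommGroup A] [Module k A]
    [AddCommGroup B] [Module k B] (ιA : A →ₗ[k] C) (ιB : B →ₗ[k] C) :
    A ⊗[k] B →ₗ[k] C :=
  LinearMap.mul' k C ∘ₗ TensorProduct.map ιA ιB

section Helpers

variable {A B A' B' : Type} [AddCommGroup A] [Module k A] [AddCommGroup B] [Module k B]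
  [AddCommGroup A'] [Module k A'] [AddCommGroup B'] [Module k B']

lemma legAct_tmul (actA : H →ₗ[k] Module.End k A) (actB : H →ₗ[k] Module.End k B)
    (g h : H) (a : A) (b : B) :
    legAct actA actB (g ⊗ₜ[k] h) (a ⊗ₜ[k] b) = actA g a ⊗ₜ[k] actB h b := by
  simp [legAct]

lemma legAct_one (actA : H →ₗ[k] Module.End k A) (actB : H →ₗ[k] Module.End k B)
    (hA : actA 1 = 1) (hB : actB 1 = 1) :
    legAct actA actB 1 = LinearMap.id := by
  have h1 : (1 : H ⊗[k] H) = (1 : H) ⊗ₜ[k] (1 : H) := rfl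
  rw [legAct, h1]
  simp [hA, hB]
  rfl

lemma legAct_mul (actA : H →ₗ[k] Module.End k A) (actB : H →ₗ[k] Module.End k B)
    (hA : ∀ g h : H, actA (g * h) = actA g * actA h)
    (hB : ∀ g h : H, actB (g * h) = actB g * actB h)
    (x y : H ⊗[k] H) :
    legAct actA actB (x * y) = legAct actA actB x ∘ₗ legAct actA actB y := by
  have hadd : ∀ (u v : H ⊗[k] H), legAct actA actB (u + v)
      = legAct actA actB u + legAct actA actB v := by
    intro u v; simp [legAct, map_add]
  have hzero : legAct actA actB (0 : H ⊗[k] H) = 0 := by simp [legAct]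
  induction x using TensorProduct.induction_on with
  | zero => simp [hzero]
  | add u v hu hv =>
    rw [add_mul, hadd, hu, hv, hadd, LinearMap.add_comp]
  | tmul g h =>
    induction y using TensorProduct.induction_on with
    | zero => simp [hzero]
    | add u v hu hv =>
      rw [mul_add, hadd, hu, hv, hadd, LinearMap.comp_add]
    | tmul g' h' =>
      rw [Algebra.TensorProduct.tmul_mul_tmul]
      apply TensorProduct.ext'
      intro a b
      simp only [legAct_tmul, LinearMap.comp_apply, hA, hB, Module.End.mul_apply]

lemma legAct_comm (actA : H →ₗ[k] Module.End k A) (actB : H →ₗ[k] Module.End k B)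
    (actA' : H →ₗ[k] Module.End k A') (actB' : H →ₗ[k] Module.End k B')
    (f : A →ₗ[k] A') (g : B →ₗ[k] B')
    (hf : ∀ (h : H) (a : A), f (actA h a) = actA' h (f a))
    (hg : ∀ (h : H) (b : B), g (actB h b) = actB' h (g b))
    (x : H ⊗[k] H) :
    TensorProduct.map f g ∘ₗ legAct actA actB x
      = legAct actA' actB' x ∘ₗ TensorProduct.map f g := by
  induction x using TensorProduct.induction_on with
  | zero => simp [legAct]
  | add u v hu hv =>
    have hadd : ∀ (actP : H →ₗ[k] Module.End k A) (actQ : H →ₗ[k] Module.End k B)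
        (u v : H ⊗[k] H), legAct actP actQ (u + v)
        = legAct actP actQ u + legAct actP actQ v := by
      intro actP actQ u v; simp [legAct, map_add]
    have hadd' : ∀ (actP : H →ₗ[k] Module.End k A') (actQ : H →ₗ[k] Module.End k B')
        (u v : H ⊗[k] H), legAct actP actQ (u + v)
        = legAct actP actQ u + legAct actP actQ v := by
      intro actP actQ u v; simp [legAct, map_add]
    rw [hadd, hadd', LinearMap.comp_add, LinearMap.add_comp, hu, hv]
  | tmul p q =>
    apply TensorProduct.ext'
    intro a b
    simp only [LinearMap.comp_apply, TensorProduct.map_tmul, legAct_tmul, hf, hg]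

end Helpers

/-- Cocycle twist of an algebra factorisation `C = A·B` in the category of `H`-modules:
the twisted multiplication restricts to a linear isomorphism `A_F ⊗ B_F ≃ C_F`, so
`C_F = A_F·B_F` is again an algebra factorisation, and the associated generalised
braiding satisfies `Ψ_{C_F} = (F ▷) ∘ Ψ_C ∘ (F⁻¹ ▷)`. -/
theorem twist_of_factorisation {C A B : Type} [Ring C] [Algebra k C] [Ring A] [Algebra k A]
    [Ring B] [Algebra k B]
    (maC : ModuleAlgebra k H C) (maA : ModuleAlgebra k H A) (maB : ModuleAlgebra k H B)
    (ιA : A →ₐ[k] C) (ιB : B →ₐ[k] C)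
    (hAeq : ∀ (h : H) (a : A), ιA (maA.act h a) = maC.act h (ιA a))
    (hBeq : ∀ (h : H) (b : B), ιB (maB.act h b) = maC.act h (ιB b))
    (hbij : Function.Bijective (resMul ιA.toLinearMap ιB.toLinearMap))
    (F Finv : H ⊗[k] H) (hF : IsCocycle k H F Finv) :
    ∃ hbijF : Function.Bijective (twistedMul maC Finv ∘ₗ
        TensorProduct.map ιA.toLinearMap ιB.toLinearMap),
      (LinearEquiv.ofBijective
            (twistedMul maC Finv ∘ₗ TensorProduct.map ιA.toLinearMap ιB.toLinearMap)
            hbijF).symm.toLinearMap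
          ∘ₗ (twistedMul maC Finv ∘ₗ TensorProduct.map ιB.toLinearMap ιA.toLinearMap) =
        legAct maA.act maB.act F
          ∘ₗ ((LinearEquiv.ofBijective (resMul ιA.toLinearMap ιB.toLinearMap)
                hbij).symm.toLinearMap
              ∘ₗ resMul ιB.toLinearMap ιA.toLinearMap)
          ∘ₗ legAct maB.act maA.act Finv := by
  classical
  have hLABmul := legAct_mul maA.act maB.act maA.act_mul maB.act_mul
  have hLABone := legAct_one maA.act maB.act maA.act_one maB.act_one
  have hid1 : legAct maA.act maB.act F ∘ₗ legAct maA.act maB.act Finv = LinearMap.id := by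
    rw [← hLABmul, hF.1, hLABone]
  have hid2 : legAct maA.act maB.act Finv ∘ₗ legAct maA.act maB.act F = LinearMap.id := by
    rw [← hLABmul, hF.2.1, hLABone]
  have hbijL : Function.Bijective (legAct maA.act maB.act Finv) :=
    Function.bijective_iff_has_inverse.2 ⟨legAct maA.act maB.act F,
      fun x => LinearMap.ext_iff.1 hid1 x, fun x => LinearMap.ext_iff.1 hid2 x⟩
  have key : twistedMul maC Finv ∘ₗ TensorProduct.map ιA.toLinearMap ιB.toLinearMap
      = resMul ιA.toLinearMap ιB.toLinearMap ∘ₗ legAct maA.act maB.act Finv := by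
    rw [twistedMul, resMul, LinearMap.comp_assoc, LinearMap.comp_assoc,
      legAct_comm maA.act maB.act maC.act maC.act ιA.toLinearMap ιB.toLinearMap
        hAeq hBeq Finv]
  have keyBA : twistedMul maC Finv ∘ₗ TensorProduct.map ιB.toLinearMap ιA.toLinearMap
      = resMul ιB.toLinearMap ιA.toLinearMap ∘ₗ legAct maB.act maA.act Finv := by
    rw [twistedMul, resMul, LinearMap.comp_assoc, LinearMap.comp_assoc,
      legAct_comm maB.act maA.act maC.act maC.act ιB.toLinearMap ιA.toLinearMap
        hBeq hAeq Finv]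
  have hbijF : Function.Bijective (twistedMul maC Finv ∘ₗ
      TensorProduct.map ιA.toLinearMap ιB.toLinearMap) := by
    rw [key, LinearMap.coe_comp]
    exact hbij.comp hbijL
  refine ⟨hbijF, ?_⟩
  set e := LinearEquiv.ofBijective (resMul ιA.toLinearMap ιB.toLinearMap) hbij with he
  set eF := LinearEquiv.ofBijective
    (twistedMul maC Finv ∘ₗ TensorProduct.map ιA.toLinearMap ιB.toLinearMap) hbijF with heF
  have hefapp : ∀ y, eF y
      = resMul ιA.toLinearMap ιB.toLinearMap (legAct maA.act maB.act Finv y) := by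
    intro y
    have : eF y = (twistedMul maC Finv ∘ₗ
        TensorProduct.map ιA.toLinearMap ιB.toLinearMap) y := rfl
    rw [this, key]; rfl
  have heapp : ∀ w, resMul ιA.toLinearMap ιB.toLinearMap (e.symm w) = w := by
    intro w
    have := e.apply_symm_apply w
    simpa [he, LinearEquiv.ofBijective_apply] using this
  apply LinearMap.ext; intro x
  simp only [LinearMap.comp_apply, LinearEquiv.coe_coe]
  have hpt : ∀ z, legAct maA.act maB.act Finv (legAct maA.act maB.act F z) = z :=
    fun z => LinearMap.congr_fun hid2 z
  rw [LinearEquiv.symm_apply_eq, hefapp, hpt, heapp]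
  exact LinearMap.congr_fun keyBA x

end
end
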